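/- Let R be essentially of finite type over an F-finite field, (M, κ) a Cartier module, and f ∈ R. Then for all λ ≥ 0: κ(τ(M, f^λ)) = τ(M, f^{λ/p}). -/

import Mathlib

open Function

variable {R : Type*} [CommRing R] {M : Type*} [AddCommGroup M] [Module R M]

/-- The submodule `κ^e (f^n • N)`. -/
def opApply (κ : M →+ M) (f : R) (e n : ℕ) (N : Submodule R M) : Submodule R M :=
  Submodule.span R ((⇑κ)^[e] '' ((fun m => f ^ n • m) '' (N : Set M)))

section Aux

variable (p : ℕ) (κ : M →+ M)

lemma kiter_zero (e : ℕ) : (⇑κ)^[e] 0 = 0 := by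
  induction e with
  | zero => rfl
  | succ e ih => rw [Function.iterate_succ_apply', ih, map_zero]

lemma kiter_add (e : ℕ) (x y : M) : (⇑κ)^[e] (x + y) = (⇑κ)^[e] x + (⇑κ)^[e] y := by
  induction e generalizing x y with
  | zero => rfl
  | succ e ih => rw [Function.iterate_succ_apply', ih, map_add,
      Function.iterate_succ_apply', Function.iterate_succ_apply']

lemma kiter_smul (hκ : ∀ (r : R) (m : M), κ (r ^ p • m) = r • κ m) (e : ℕ) (r : R) (m : M) :
    (⇑κ)^[e] (r ^ p ^ e • m) = r • (⇑κ)^[e] m := by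
  induction e generalizing r m with
  | zero => simp
  | succ e ih =>
      have h1 : r ^ p ^ (e + 1) = (r ^ p) ^ p ^ e := by
        rw [← pow_mul, ← pow_succ']
      rw [Function.iterate_succ_apply', h1, ih, hκ, Function.iterate_succ_apply']

/-- The submodule whose carrier is `κ^[e] '' W`. -/
def kiter (hκ : ∀ (r : R) (m : M), κ (r ^ p • m) = r • κ m) (e : ℕ) (W : Submodule R M) : Submodule R M where
  carrier := (⇑κ)^[e] '' (W : Set M)
  zero_mem' := ⟨0, W.zero_mem, kiter_zero κ e⟩
  add_mem' := by
    rintro a b ⟨x, hx, rfl⟩ ⟨y, hy, rfl⟩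
    exact ⟨x + y, W.add_mem hx hy, kiter_add κ e x y⟩
  smul_mem' := by
    rintro r a ⟨x, hx, rfl⟩
    exact ⟨r ^ p ^ e • x, W.smul_mem _ hx, kiter_smul p κ hκ e r x⟩

lemma opApply_eq (hκ : ∀ (r : R) (m : M), κ (r ^ p • m) = r • κ m) (f : R) (e ν : ℕ) (N : Submodule R M) :
    opApply κ f e ν N = kiter p κ hκ e (N.map (LinearMap.lsmul R M (f ^ ν))) := by
  have hset : ((fun m => f ^ ν • m) '' (N : Set M)) =
      ((N.map (LinearMap.lsmul R M (f ^ ν)) : Submodule R M) : Set M) := by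
    rw [Submodule.map_coe]; rfl
  rw [opApply, hset]
  exact Submodule.span_eq (kiter p κ hκ e (N.map (LinearMap.lsmul R M (f ^ ν))))

end Aux

/-- Lemma 2.1: `κ(τ(M, f^λ)) = τ(M, f^{λ/p})`. The test module filtration `τ` is
axiomatized via its presentation
`τ(M, f^λ) = Σᵢ Σ_{e ≥ e₀} κ^e f^{⌈λp^e⌉} cᵢ Nᵢ` (valid for any `e₀ ≥ 0`),
where the `cᵢ` form a sequence of test elements and `Nᵢ = H⁰_{ηᵢ}(M)`-underline. -/
theorem kappa_tau_eq_tau_div_p (p : ℕ) (hp : p.Prime) [CharP R p]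
    (κ : M →+ M) (hκ : ∀ (r : R) (m : M), κ (r ^ p • m) = r • κ m)
    (f : R) (τ : ℚ → Submodule R M)
    (n : ℕ) (c : Fin n → R) (Nm : Fin n → Submodule R M)
    (hpres : ∀ lam : ℚ, 0 ≤ lam → ∀ e₀ : ℕ,
      τ lam = ⨆ i : Fin n, ⨆ e : ℕ, ⨆ _ : e₀ ≤ e,
        opApply κ f e (⌈lam * (p : ℚ) ^ e⌉).toNat
          ((Nm i).map (LinearMap.lsmul R M (c i))))
    (lam : ℚ) (hlam : 0 ≤ lam) :
    Submodule.span R (⇑κ '' (τ lam : Set M)) = τ (lam / p) := by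
  have hp0 : (p : ℚ) ≠ 0 := Nat.cast_ne_zero.mpr hp.ne_zero
  have hceil : ∀ e : ℕ, (⌈lam / p * (p : ℚ) ^ (e + 1)⌉).toNat =
      (⌈lam * (p : ℚ) ^ e⌉).toNat := by
    intro e
    have : lam / p * (p : ℚ) ^ (e + 1) = lam * (p : ℚ) ^ e := by
      field_simp; ring
    rw [this]
  set N' : Fin n → Submodule R M := fun i => (Nm i).map (LinearMap.lsmul R M (c i)) with hN'
  have hτ0 := hpres lam hlam 0
  have hτ1 := hpres (lam / p) (div_nonneg hlam (Nat.cast_nonneg p)) 1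
  -- each opApply term (at level e for lam) is contained in τ lam
  have hin : ∀ (i : Fin n) (e : ℕ),
      opApply κ f e (⌈lam * (p : ℚ) ^ e⌉).toNat (N' i) ≤ τ lam := by
    intro i e
    rw [hτ0]
    refine le_trans ?_ (le_iSup _ i)
    refine le_trans ?_ (le_iSup _ e)
    exact le_iSup (fun _ : 0 ≤ e =>
      opApply κ f e (⌈lam * (p : ℚ) ^ e⌉).toNat (N' i)) (Nat.zero_le e)
  -- each opApply term at level e+1 (with exponent for lam at level e) is in τ (lam/p)
  have hin' : ∀ (i : Fin n) (e : ℕ),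
      opApply κ f (e + 1) (⌈lam * (p : ℚ) ^ e⌉).toNat (N' i) ≤ τ (lam / p) := by
    intro i e
    rw [hτ1]
    refine le_trans ?_ (le_iSup _ i)
    refine le_trans ?_ (le_iSup _ (e + 1))
    rw [hceil e]
    exact le_iSup (fun _ : 1 ≤ e + 1 =>
      opApply κ f (e + 1) (⌈lam * (p : ℚ) ^ e⌉).toNat (N' i)) (Nat.succ_le_succ (Nat.zero_le e))
  apply le_antisymm
  · -- span (κ '' τ lam) ≤ τ (lam / p)
    rw [Submodule.span_le]
    rintro _ ⟨x, hx, rfl⟩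
    rw [hτ0] at hx
    simp only [Nat.zero_le, iSup_pos] at hx
    refine Submodule.iSup_induction _ (motive := fun y => κ y ∈ τ (lam / p)) hx ?_ ?_ ?_
    · intro i x hx
      refine Submodule.iSup_induction _ (motive := fun y => κ y ∈ τ (lam / p)) hx ?_ ?_ ?_
      · intro e y hy
        refine hin' i e ?_
        rw [opApply_eq p κ hκ] at hy ⊢
        obtain ⟨s, hs, rfl⟩ := hy
        exact ⟨s, hs, Function.iterate_succ_apply' (⇑κ) e s⟩
      · simp
      · intro a b ha hb
        rw [map_add]
        exact (τ (lam / p)).add_mem ha hb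
    · simp
    · intro a b ha hb
      rw [map_add]
      exact (τ (lam / p)).add_mem ha hb
  · -- τ (lam / p) ≤ span (κ '' τ lam)
    rw [hτ1]
    refine iSup_le fun i => iSup_le fun e => iSup_le fun he => ?_
    obtain ⟨e', rfl⟩ : ∃ e', e = e' + 1 := ⟨e - 1, (Nat.succ_pred_eq_of_pos he).symm⟩
    rw [hceil e']
    intro x hx
    rw [opApply_eq p κ hκ] at hx
    obtain ⟨s, hs, rfl⟩ := hx
    rw [Function.iterate_succ_apply' (⇑κ) e' s]
    refine Submodule.subset_span ⟨(⇑κ)^[e'] s, ?_, rfl⟩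
    exact hin i e' ((opApply_eq p κ hκ f e' _ (N' i)) ▸ ⟨s, hs, rfl⟩)
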